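/- Let φ, θ be 2×2 complex matrices and ψ : Fin 2 → Fin 2 → Fin 2 → ℂ a rank-three tensor. Suppose ∑_{α,β} φ_{α,β} ψ_{α,β,γ} = 0 for all γ, and ∑_{β,γ} θ_{β,γ} ψ_{α,β,γ} = 0 for all α. Define ω = φ ε θ where ε is the 2×2 antisymmetric matrix with ε_{0,1}=1, ε_{1,0}=-1, ε_{0,0}=ε_{1,1}=0. Then ∑_{α,γ} ω_{α,γ} ψ_{α,β,γ} = 0 for all β. -/
import Mathlib


open Finset

/-- Lemma 1 (key local rule) of quantum 2-SAT: if a rank-three tensor ψ is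
annihilated by contraction with φ on indices (1,2) and with θ on indices (2,3),
then it is annihilated by ω = φ ε θ on indices (1,3). -/
theorem stmt_0 (φ θ ε ω : Matrix (Fin 2) (Fin 2) ℂ)
    (ψ : Fin 2 → Fin 2 → Fin 2 → ℂ)
    (hε : ε = Matrix.of ![![0, 1], ![-1, 0]])
    (hφ : ∀ γ, ∑ α, ∑ β, φ α β * ψ α β γ = 0)
    (hθ : ∀ α, ∑ β, ∑ γ, θ β γ * ψ α β γ = 0)
    (hω : ω = φ * ε * θ) :
    ∀ β, ∑ α, ∑ γ, ω α γ * ψ α β γ = 0 := by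
  subst hε hω
  have h0 := hφ 0
  have h1 := hφ 1
  have k0 := hθ 0
  have k1 := hθ 1
  simp only [Fin.sum_univ_two, Matrix.mul_apply, Matrix.of_apply,
    Matrix.cons_val', Matrix.cons_val_zero, Matrix.cons_val_one,
    Matrix.head_cons, Matrix.empty_val', Matrix.cons_val_fin_one,
    Matrix.head_fin_const] at *
  intro β
  fin_cases β <;> simp only [Fin.mk_zero, Fin.mk_one]
  · linear_combination (θ 1 0) * h0 + (θ 1 1) * h1 - (φ 0 1) * k0 - (φ 1 1) * k1
  · linear_combination -(θ 0 0) * h0 - (θ 0 1) * h1 + (φ 0 0) * k0 + (φ 1 0) * k1
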